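/- arXiv:1404.1274 — 6 statements merged into one kernel-verified Lean document; each statement's English description precedes it below -/
import Mathlib

section
/- For every natural number m ≥ 1, the polynomial x^3 - m x^2 - m x - m has exactly one real root β with β > 1, and this root satisfies m < β < m + 1. -/
theorem stmt_1 (m : ℕ) (hm : 1 ≤ m) :
    (∃! β : ℝ, 1 < β ∧ β ^ 3 - m * β ^ 2 - m * β - m = 0) ∧
    (∀ β : ℝ, 1 < β → β ^ 3 - m * β ^ 2 - m * β - m = 0 →
      (m : ℝ) < β ∧ β < m + 1) := by
  have hm' : (1:ℝ) ≤ m := by exact_mod_cast hm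
  have key : ∀ β : ℝ, 1 < β → β ^ 3 - m * β ^ 2 - m * β - m = 0 →
      (m : ℝ) < β ∧ β < m + 1 := by
    intro β hβ h0
    constructor
    · by_contra h; push_neg at h
      nlinarith [sq_nonneg β, sq_nonneg (β - 1), mul_pos (show (0:ℝ) < β by linarith) (show (0:ℝ) < β by linarith)]
    · by_contra h; push_neg at h
      nlinarith [sq_nonneg β, sq_nonneg (β - 1), sq_nonneg (β - m - 1)]
  refine ⟨?_, key⟩
  have hcont : Continuous fun x : ℝ => x ^ 3 - m * x ^ 2 - m * x - m := by continuity
  have hlt : (m:ℝ) ≤ m + 1 := by linarith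
  have hIVT := intermediate_value_Ioo hlt hcont.continuousOn
  have h0 : (0:ℝ) ∈ Set.Ioo ((m:ℝ) ^ 3 - m * m ^ 2 - m * m - m)
      ((m + 1) ^ 3 - m * (m + 1) ^ 2 - m * (m + 1) - m) := by
    constructor
    · nlinarith
    · nlinarith
  obtain ⟨β, hβmem, hβ0⟩ := hIVT h0
  have hβ1 : 1 < β := by have := hβmem.1; linarith
  have hβ0' : β ^ 3 - m * β ^ 2 - m * β - m = 0 := by simpa using hβ0
  refine ⟨β, ⟨hβ1, hβ0'⟩, ?_⟩
  rintro γ ⟨hγ1, hγ0⟩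
  have hγb := key γ hγ1 hγ0
  have hβb := key β hβ1 hβ0'
  have hfac : (γ - β) * (γ ^ 2 + γ * β + β ^ 2 - m * (γ + β) - m) = 0 := by
    linear_combination hγ0 - hβ0'
  have hpos : 0 < γ ^ 2 + γ * β + β ^ 2 - m * (γ + β) - m := by
    nlinarith [mul_pos (show (0:ℝ) < γ - m by linarith [hγb.1]) (show (0:ℝ) < γ by linarith),
      mul_pos (show (0:ℝ) < γ - m by linarith [hγb.1]) (show (0:ℝ) < β by linarith),
      mul_pos (show (0:ℝ) < β - m by linarith [hβb.1]) (show (0:ℝ) < β by linarith)]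
  have := mul_eq_zero.mp hfac
  rcases this with h | h
  · linarith
  · linarith
end

section
/- Let β > 1 be the real root of x^3 - m x^2 - m x - m for a positive integer m, and let ℓ = -β/(β+1). Then the Ito–Sadahiro (-β)-expansion of ℓ is d_{-β}(ℓ) = m 0 m m m m ⋯ (the digit m, then 0, then m repeated forever); equivalently, T_{-β}(ℓ) = -βℓ - m lies in [ℓ, ℓ+1), T_{-β}^2(ℓ) satisfies the digit 0, and T_{-β}^n(ℓ) = T_{-β}^2(ℓ) for all n ≥ 2 with digit m. -/
theorem stmt_4 (m : ℕ) (hm : 1 ≤ m) (β : ℝ) (hβ : 1 < β)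
    (hroot : β ^ 3 - m * β ^ 2 - m * β - m = 0)
    (ℓ : ℝ) (hℓ : ℓ = -β / (β + 1))
    (T : ℝ → ℝ) (hT : ∀ x, T x = -β * x - ⌊-β * x - ℓ⌋) :
    ⌊-β * ℓ - ℓ⌋ = (m : ℤ) ∧
    T ℓ = -β * ℓ - m ∧ T ℓ ∈ Set.Ico ℓ (ℓ + 1) ∧
    ⌊-β * T ℓ - ℓ⌋ = 0 ∧
    (∀ n : ℕ, 2 ≤ n → T^[n] ℓ = T^[2] ℓ ∧ ⌊-β * T^[n] ℓ - ℓ⌋ = (m : ℤ)) := by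
  have hβ0 : (0:ℝ) < β := by linarith
  have hβ1 : (0:ℝ) < β + 1 := by linarith
  have hβne : β ≠ 0 := ne_of_gt hβ0
  have hβ1ne : β + 1 ≠ 0 := ne_of_gt hβ1
  have hm1 : (1:ℝ) ≤ m := by exact_mod_cast hm
  -- β² (β - m) = m (β + 1)
  have key1 : β ^ 2 * (β - m) = m * (β + 1) := by nlinarith [hroot]
  have hmβ : (m:ℝ) < β := by nlinarith [sq_nonneg β, mul_pos hβ0 hβ0]
  -- β (β² - mβ - m) = m
  have key2 : β * (β ^ 2 - m * β - m) = m := by nlinarith [hroot]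
  have hpos2 : (0:ℝ) < β ^ 2 - m * β - m := by nlinarith
  have hβm1 : β < m + 1 := by nlinarith
  have hfloorβ : ⌊β⌋ = (m : ℤ) := by
    rw [Int.floor_eq_iff]
    constructor
    · push_cast; linarith
    · push_cast; linarith
  have heq1 : -β * ℓ - ℓ = β := by rw [hℓ]; field_simp; ring
  have hc1 : ⌊-β * ℓ - ℓ⌋ = (m : ℤ) := by rw [heq1]; exact hfloorβ
  have hTℓeq : T ℓ = -β * ℓ - m := by rw [hT, hc1]; push_cast; ring
  have hTℓ : T ℓ = m / (β * (β + 1)) := by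
    rw [hTℓeq, hℓ]; field_simp; nlinarith [hroot]
  have hℓneg : ℓ < 0 := by
    rw [hℓ]; exact div_neg_of_neg_of_pos (by linarith) hβ1
  have hTpos : 0 < T ℓ := by
    rw [hTℓ]; positivity
  have hℓ1 : ℓ + 1 = 1 / (β + 1) := by rw [hℓ]; field_simp; ring
  have hmem : T ℓ ∈ Set.Ico ℓ (ℓ + 1) := by
    constructor
    · linarith
    · rw [hTℓ, hℓ1]
      rw [div_lt_div_iff₀ (by positivity) hβ1]
      nlinarith
  have heq2 : -β * T ℓ - ℓ = (β - m) / (β + 1) := by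
    rw [hTℓ, hℓ]; field_simp; ring
  have hd2 : ⌊-β * T ℓ - ℓ⌋ = 0 := by
    rw [heq2, Int.floor_eq_zero_iff]
    exact ⟨div_nonneg (by linarith) hβ1.le, (div_lt_one hβ1).2 (by linarith)⟩
  have hT2 : T (T ℓ) = -m / (β + 1) := by
    rw [hT, hd2, hTℓ]; push_cast; field_simp; ring
  -- digit at the fixed point
  have heq3 : -β * (-(m:ℝ) / (β + 1)) - ℓ = β * (m + 1) / (β + 1) := by
    rw [hℓ]; field_simp; ring
  have hd3 : ⌊-β * (-(m:ℝ) / (β + 1)) - ℓ⌋ = (m : ℤ) := by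
    rw [heq3, Int.floor_eq_iff]
    constructor
    · push_cast
      rw [le_div_iff₀ hβ1]; nlinarith
    · push_cast
      rw [div_lt_iff₀ hβ1]; nlinarith
  have hfix : T (-(m:ℝ) / (β + 1)) = -(m:ℝ) / (β + 1) := by
    rw [hT, hd3]; push_cast; field_simp; ring
  have hT2' : T^[2] ℓ = -(m:ℝ) / (β + 1) := by
    simp [Function.iterate_succ', hT2]
  refine ⟨hc1, hTℓeq, hmem, hd2, ?_⟩
  intro n hn
  have hiter : ∀ k : ℕ, T^[k + 2] ℓ = -(m:ℝ) / (β + 1) := by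
    intro k
    rw [Function.iterate_add_apply, hT2', Function.iterate_fixed hfix]
  obtain ⟨k, rfl⟩ : ∃ k, n = k + 2 := ⟨n - 2, by omega⟩
  refine ⟨by rw [hiter, hT2'], ?_⟩
  rw [hiter]
  exact hd3
end

section
/- Let β > 1 be the real root of x^3 - m x^2 - m x - m for an integer m ≥ 1. Then β is a Pisot number: its two other (complex) conjugate roots have absolute value strictly less than 1. -/
theorem stmt_10 (m : ℕ) (hm : 1 ≤ m) (β : ℝ) (hβ : 1 < β)
    (hroot : β ^ 3 - m * β ^ 2 - m * β - m = 0) :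
    ∀ z : ℂ, z ^ 3 - m * z ^ 2 - m * z - m = 0 → z ≠ (β : ℂ) →
      ‖z‖ < 1 := by
  intro z hz hzβ
  have hm' : (1:ℝ) ≤ m := by exact_mod_cast hm
  have hβ0 : (0:ℝ) < β := by linarith
  have hβm : (m:ℝ) < β := by nlinarith
  set c : ℝ := β^2 - m*β - m with hcdef
  have hβc : β * c = m := by rw [hcdef]; linear_combination hroot
  have hc0 : 0 < c := by nlinarith
  have hc1 : c < 1 := by nlinarith
  have hC : (β:ℂ)^3 - m*β^2 - m*β - m = 0 := by exact_mod_cast congrArg (Complex.ofReal) hroot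
  have hquad : z^2 + ((β:ℂ) - m)*z + (c:ℂ) = 0 := by
    have hfac : (z - β) * (z^2 + ((β:ℂ) - m)*z + (c:ℂ)) = z^3 - m*z^2 - m*z - m := by
      rw [hcdef]; push_cast; linear_combination -hC
    rcases mul_eq_zero.mp (hfac.trans hz) with h | h
    · exact absurd (sub_eq_zero.mp h) hzβ
    · exact h
  by_cases him : z.im = 0
  · have hx : z = ((z.re : ℝ) : ℂ) := by
      apply Complex.ext <;> simp [him]
    set x := z.re with hxdef
    have hqx : x^2 + (β - m)*x + c = 0 := by
      rw [hx] at hquad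
      exact_mod_cast hquad
    have h1 : x < 1 := by nlinarith [sq_nonneg x, sq_nonneg (x-1), sq_nonneg (x+1)]
    have h2 : -1 < x := by nlinarith [sq_nonneg x, sq_nonneg (x-1), sq_nonneg (x+1), mul_pos hβ0 hc0]
    rw [hx, Complex.norm_real, Real.norm_eq_abs]
    exact abs_lt.mpr ⟨h2, h1⟩
  · set w := (starRingEnd ℂ) z with hwdef
    have hquad' : w^2 + ((β:ℂ) - m)*w + (c:ℂ) = 0 := by
      have := congrArg (starRingEnd ℂ) hquad
      simpa [map_add, map_mul, map_pow, map_sub] using this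
    have hzw : z - w ≠ 0 := by
      rw [sub_ne_zero]
      intro h
      exact him (Complex.conj_eq_iff_im.mp h.symm)
    have hsum : z + w = (m:ℂ) - β := by
      have hfac2 : (z - w) * (z + w + ((β:ℂ) - m)) = 0 := by
        linear_combination hquad - hquad'
      rcases mul_eq_zero.mp hfac2 with h | h
      · exact absurd h hzw
      · linear_combination h
    have hprod : z * w = (c:ℂ) := by linear_combination z * hsum - hquad
    have hns : Complex.normSq z = c := by
      have : ((Complex.normSq z : ℝ) : ℂ) = (c:ℂ) := by
        rw [← Complex.mul_conj]; exact hprod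
      exact_mod_cast this
    have hsq : (‖z‖)^2 = c := by rw [Complex.sq_norm, hns]
    nlinarith [norm_nonneg z]
end

section
/- Let β > 1 and ℓ = -β/(β+1). For every x ∈ [ℓ, ℓ+1) and every i ≥ 1, the digit x_i = ⌊-β T_{-β}^{i-1}(x) - ℓ⌋ satisfies 0 ≤ x_i ≤ ⌊β⌋, and x = Σ_{i≥1} x_i (-β)^{-i}. -/
theorem stmt_13 (β : ℝ) (hβ : 1 < β) (ℓ : ℝ) (hℓ : ℓ = -β / (β + 1))
    (T : ℝ → ℝ) (hT : ∀ x, T x = -β * x - ⌊-β * x - ℓ⌋)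
    (x : ℝ) (hx : x ∈ Set.Ico ℓ (ℓ + 1))
    (dig : ℕ → ℤ) (hdig : ∀ i : ℕ, dig i = ⌊-β * T^[i] x - ℓ⌋) :
    (∀ i : ℕ, 0 ≤ dig i ∧ dig i ≤ ⌊β⌋) ∧
    HasSum (fun i : ℕ => (dig i : ℝ) * (-β) ^ (-(i + 1 : ℤ))) x := by
  have hβ0 : (0:ℝ) < β := by linarith
  have hβ1 : (0:ℝ) < β + 1 := by linarith
  have hℓv : ℓ * (β + 1) = -β := by rw [hℓ]; field_simp
  -- T^[n] x always stays in Ico ℓ (ℓ+1)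
  have hTmem : ∀ y : ℝ, T y ∈ Set.Ico ℓ (ℓ + 1) := by
    intro y
    have hfr : T y = Int.fract (-β * y - ℓ) + ℓ := by
      rw [hT, Int.fract]; ring
    have h1 := Int.fract_nonneg (-β * y - ℓ)
    have h2 := Int.fract_lt_one (-β * y - ℓ)
    constructor <;> (rw [hfr]) <;> linarith
  have hmem : ∀ n : ℕ, T^[n] x ∈ Set.Ico ℓ (ℓ + 1) := by
    intro n
    cases n with
    | zero => simpa using hx
    | succ n => rw [Function.iterate_succ_apply']; exact hTmem _
  -- range of -β*y - ℓ
  have key : ∀ y ∈ Set.Ico ℓ (ℓ + 1), 0 < -β * y - ℓ ∧ -β * y - ℓ ≤ β := by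
    intro y hy
    obtain ⟨h1, h2⟩ := hy
    constructor
    · nlinarith [mul_lt_mul_of_pos_right h2 hβ1, hℓv, hβ0, hβ1]
    · nlinarith [mul_le_mul_of_nonneg_right h1 (le_of_lt hβ1), hℓv, hβ0, hβ1]
  have hdigbd : ∀ i : ℕ, 0 ≤ dig i ∧ dig i ≤ ⌊β⌋ := by
    intro i
    obtain ⟨h1, h2⟩ := key _ (hmem i)
    rw [hdig i]
    exact ⟨Int.floor_nonneg.mpr (le_of_lt h1), Int.floor_le_floor h2⟩
  refine ⟨hdigbd, ?_⟩
  have hne : (-β : ℝ) ≠ 0 := by intro h; nlinarith [neg_eq_zero.mp h]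
  -- recursion
  have hrec : ∀ n : ℕ, T^[n+1] x = -β * T^[n] x - dig n := by
    intro n
    rw [Function.iterate_succ_apply', hT, hdig]
  -- telescoping
  have htel : ∀ n : ℕ,
      x - ∑ i ∈ Finset.range n, (dig i : ℝ) * (-β) ^ (-(i + 1 : ℤ))
        = T^[n] x * (-β) ^ (-(n : ℤ)) := by
    intro n
    induction n with
    | zero => simp
    | succ n ih =>
      have hz : -β * (-β) ^ (-((n:ℤ) + 1)) = (-β) ^ (-(n:ℤ)) := by
        rw [show (-(n:ℤ)) = -((n:ℤ)+1)+1 by ring, zpow_add_one₀ hne]; ring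
      rw [Finset.sum_range_succ, hrec n]
      push_cast
      linear_combination ih - T^[n] x * hz
  -- remainder tends to 0
  have habsz : ∀ n : ℕ, |(-β : ℝ) ^ (-(n : ℤ))| = (β⁻¹) ^ n := by
    intro n
    rw [zpow_neg, zpow_natCast, abs_inv, abs_pow, abs_neg, abs_of_pos hβ0, inv_pow]
  have hbound : ∀ n : ℕ, |T^[n] x * (-β) ^ (-(n : ℤ))| ≤ (β⁻¹) ^ n := by
    intro n
    obtain ⟨h1, h2⟩ := hmem n
    have hy1 : |T^[n] x| ≤ 1 := by
      rw [abs_le]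
      constructor
      · nlinarith [hℓv, hβ0]
      · nlinarith [hℓv, hβ0]
    calc |T^[n] x * (-β) ^ (-(n : ℤ))| = |T^[n] x| * |(-β:ℝ) ^ (-(n : ℤ))| :=
          abs_mul _ _
      _ ≤ 1 * (β⁻¹) ^ n := by
          rw [habsz n]; exact mul_le_mul_of_nonneg_right hy1 (by positivity)
      _ = (β⁻¹) ^ n := one_mul _
  have hinv : β⁻¹ < 1 := inv_lt_one_of_one_lt₀ hβ
  have hgeo : Filter.Tendsto (fun n : ℕ => (β⁻¹) ^ n) Filter.atTop (nhds 0) :=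
    tendsto_pow_atTop_nhds_zero_of_lt_one (by positivity) hinv
  have hrem : Filter.Tendsto (fun n : ℕ => T^[n] x * (-β) ^ (-(n : ℤ)))
      Filter.atTop (nhds 0) := by
    apply squeeze_zero_norm _ hgeo
    intro n
    rw [Real.norm_eq_abs]
    exact hbound n
  have htendsto : Filter.Tendsto
      (fun n : ℕ => ∑ i ∈ Finset.range n, (dig i : ℝ) * (-β) ^ (-(i + 1 : ℤ)))
      Filter.atTop (nhds x) := by
    have heq : (fun n : ℕ => ∑ i ∈ Finset.range n, (dig i : ℝ) * (-β) ^ (-(i + 1 : ℤ)))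
        = fun n => x - T^[n] x * (-β) ^ (-(n : ℤ)) := by
      funext n; linarith [htel n]
    rw [heq]
    simpa using (tendsto_const_nhds.sub hrem)
  -- summability
  have hsum : Summable (fun i : ℕ => (dig i : ℝ) * (-β) ^ (-(i + 1 : ℤ))) := by
    apply Summable.of_norm_bounded (g := fun i : ℕ => (β⁻¹) ^ i)
      (summable_geometric_of_lt_one (by positivity) hinv)
    intro i
    obtain ⟨h1, h2⟩ := hdigbd i
    have hd : |(dig i : ℝ)| ≤ β := by
      rw [abs_of_nonneg (by exact_mod_cast h1)]
      calc (dig i : ℝ) ≤ (⌊β⌋ : ℝ) := by exact_mod_cast h2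
        _ ≤ β := Int.floor_le β
    have habs : |(-β : ℝ) ^ (-(i + 1 : ℤ))| = (β⁻¹) ^ (i + 1) := by
      rw [show (-(i + 1 : ℤ)) = -(((i+1 : ℕ)) : ℤ) by push_cast; ring]
      exact habsz (i + 1)
    rw [Real.norm_eq_abs, abs_mul, habs]
    calc |(dig i : ℝ)| * (β⁻¹) ^ (i+1) ≤ β * (β⁻¹) ^ (i+1) :=
          mul_le_mul_of_nonneg_right hd (by positivity)
      _ = (β⁻¹) ^ i := by
          rw [pow_succ, mul_comm ((β⁻¹) ^ i), ← mul_assoc,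
            mul_inv_cancel₀ (ne_of_gt hβ0), one_mul]
  exact (hsum.hasSum_iff_tendsto_nat).mpr htendsto
end

section
/- Let γ > 1 be the real root of x^3 - x^2 - x - 1 and let ℓ = -γ/(γ+1). Then the (-γ)-expansion of ℓ is 1 0 1 1 1 1 ⋯ (digit 1, then 0, then 1 repeated): i.e. ⌊-γℓ - ℓ⌋ = 1, and with t = T_{-γ}(ℓ), ⌊-γt - ℓ⌋ = 0, and T_{-γ}^2(ℓ) is a fixed point of T_{-γ} with digit 1. -/
theorem stmt_14 (γ : ℝ) (hγ : 1 < γ) (hroot : γ ^ 3 - γ ^ 2 - γ - 1 = 0)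
    (ℓ : ℝ) (hℓ : ℓ = -γ / (γ + 1))
    (T : ℝ → ℝ) (hT : ∀ x, T x = -γ * x - ⌊-γ * x - ℓ⌋) :
    ⌊-γ * ℓ - ℓ⌋ = 1 ∧
    ⌊-γ * T ℓ - ℓ⌋ = 0 ∧
    T (T^[2] ℓ) = T^[2] ℓ ∧
    ⌊-γ * T^[2] ℓ - ℓ⌋ = 1 := by
  have hpos : (0:ℝ) < γ + 1 := by linarith
  have hne : γ + 1 ≠ 0 := ne_of_gt hpos
  have hγ2 : γ < 2 := by nlinarith
  have h1 : -γ * ℓ - ℓ = γ := by rw [hℓ]; field_simp; ring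
  have f1 : ⌊-γ * ℓ - ℓ⌋ = 1 := by
    rw [h1, Int.floor_eq_iff]
    push_cast
    constructor <;> linarith
  have hTℓ : T ℓ = (γ^2 - γ - 1) / (γ + 1) := by
    rw [hT, f1, hℓ]; push_cast; field_simp; ring
  have h2 : -γ * T ℓ - ℓ = (γ - 1) / (γ + 1) := by
    rw [hTℓ, hℓ]; field_simp; linear_combination (-1) * hroot
  have f2 : ⌊-γ * T ℓ - ℓ⌋ = 0 := by
    rw [h2, Int.floor_eq_iff]
    push_cast
    constructor
    · exact div_nonneg (by linarith) (by linarith)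
    · rw [div_lt_iff₀ hpos]; linarith
  have hit : T^[2] ℓ = T (T ℓ) := rfl
  have hT2 : T^[2] ℓ = -1 / (γ + 1) := by
    rw [hit, hT, f2, hTℓ]; push_cast; field_simp; linear_combination (-1) * hroot
  have h3 : -γ * T^[2] ℓ - ℓ = 2 * γ / (γ + 1) := by
    rw [hT2, hℓ]; field_simp; ring
  have f3 : ⌊-γ * T^[2] ℓ - ℓ⌋ = 1 := by
    rw [h3, Int.floor_eq_iff]
    push_cast
    constructor
    · rw [le_div_iff₀ hpos]; linarith
    · rw [div_lt_iff₀ hpos]; linarith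
  refine ⟨f1, f2, ?_, f3⟩
  rw [hT, f3, hT2]
  push_cast
  field_simp
  ring
end

section
/- Let γ be the Tribonacci constant. If x and y are real numbers each representable as Σ_{i=0}^{K} d_i (-γ)^i with digits d_i ∈ {0,1} (i.e. x, y are (-γ)-integers in the representational sense), then x + y is representable as Σ_{i=-6}^{K'} e_i (-γ)^i with digits e_i ∈ {0,1}, i.e. at most 6 fractional digits suffice. -/
set_option maxHeartbeats 4000000
set_option maxRecDepth 100000

def Qset : List (ℤ × ℤ × ℤ) := [(-2,1,0), (-2,1,1), (-2,2,0), (-2,2,1), (-2,3,1), (-1,-1,0), (-1,-1,1), (-1,-1,2), (-1,-1,3), (-1,0,-1), (-1,0,0), (-1,0,1), (-1,0,2), (-1,0,3), (-1,1,-1), (-1,1,0), (-1,1,1), (-1,1,2), (-1,1,3), (-1,2,0), (-1,2,1), (-1,2,2), (-1,2,3), (-1,3,0), (-1,3,1), (-1,3,2), (-1,4,1), (0,-2,1), (0,-2,2), (0,-2,3), (0,-1,-1), (0,-1,0), (0,-1,1), (0,-1,2), (0,-1,3), (0,0,-1), (0,0,0), (0,0,1), (0,0,2), (0,0,3), (0,0,4),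 (0,1,-1), (0,1,0), (0,1,1), (0,1,2), (0,1,3), (0,1,4), (0,2,0), (0,2,1), (0,2,2), (0,2,3), (0,3,0), (0,3,1), (0,3,2), (0,4,1), (1,-3,2), (1,-2,1), (1,-2,2), (1,-1,-1), (1,-1,0), (1,-1,1), (1,-1,2), (1,-1,3), (1,0,-2), (1,0,-1), (1,0,0), (1,0,1), (1,0,2), (1,0,3), (1,1,-1), (1,1,0), (1,1,1), (1,1,2), (1,1,3), (1,1,4), (1,2,-1), (1,2,0), (1,2,1), (1,2,2), (1,2,3), (1,3,0), (1,3,1), (1,3,2), (1,4,0), (1,4,1), (2,-3,2), (2,-2,1), (2,-2,2), (2,-1,-1), (2,-1,0), (2,-1,1), (2,-1,2), (2,-1,3), (2,0,-1), (2,0,0), (2,0,1), (2,0,2), (2,0,3), (2,1,-1), (2,1,0), (2,1,1), (2,1,2), (2,1,3), (2,1,4), (2,2,-1), (2,2,0), (2,2,1), (2,2,2), (2,2,3), (2,3,0), (2,3,1), (3,-2,1), (3,-2,2), (3,-1,0), (3,-1,1), (3,-1,2), (3,0,0), (3,0,1), (3,0,2), (3,0,3), (3,1,0), (3,1,1), (3,1,2),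 (3,1,3), (4,-1,2), (4,0,3)]

def flushTab : List ((ℤ × ℤ × ℤ) × List ℤ) := [((-2,1,0), [0,1,1,1,1,0,0,1,0,0,0]), ((-2,1,1), [0,0,0,0,0,1,0,0,1,0,0]), ((-2,2,0), [0,1,0,0,1,1,0,0,1,0,0]), ((-2,2,1), [0,0,0,1,0,1,0,0,1,0,0]), ((-2,3,1), [0,1,1,1,1,1,0,0,1,0,0]), ((-1,-1,0), [0,0,0,0,1,0,0,1,0,0,0]), ((-1,-1,1), [0,0,1,0,1,0,0,1,0,0,0]), ((-1,-1,2), [1,1,1,1,1,0,0,1,0,0,0]), ((-1,-1,3), [1,0,0,0,0,1,0,0,1,0,0]), ((-1,0,-1), [0,1,1,1,0,0,1,0,0,0,0]), ((-1,0,0), [0,0,0,1,1,0,0,1,0,0,0]), ((-1,0,1), [0,0,1,1,1,0,0,1,0,0,0]), ((-1,0,2), [1,1,0,0,1,1,0,0,1,0,0]), ((-1,0,3), [1,0,0,1,0,1,0,0,1,0,0]), ((-1,1,-1), [0,1,0,0,0,0,0,0,0,0,0]), ((-1,1,0), [0,1,1,0,0,0,0,0,0,0,0]), ((-1,1,1),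 [0,0,0,0,1,1,0,0,1,0,0]), ((-1,1,2), [0,0,1,0,1,1,0,0,1,0,0]), ((-1,1,3), [1,1,1,1,1,1,0,0,1,0,0]), ((-1,2,0), [0,1,1,1,0,0,0,0,0,0,0]), ((-1,2,1), [0,0,0,1,1,1,0,0,1,0,0]), ((-1,2,2), [0,0,1,1,1,1,0,0,1,0,0]), ((-1,2,3), [1,1,0,0,0,0,1,0,0,1,0]), ((-1,3,0), [0,1,0,0,0,1,1,0,0,1,0]), ((-1,3,1), [0,1,1,0,0,1,1,0,0,1,0]), ((-1,3,2), [0,0,0,0,0,0,1,0,0,1,0]), ((-1,4,1), [0,1,0,0,1,0,1,0,0,1,0]), ((0,-2,1), [1,1,1,1,0,0,1,0,0,0,0]), ((0,-2,2), [1,0,0,1,1,0,0,1,0,0,0]), ((0,-2,3), [1,0,1,1,1,0,0,1,0,0,0]), ((0,-1,-1), [0,0,0,1,0,0,1,0,0,0,0]), ((0,-1,0), [0,0,1,1,0,0,1,0,0,0,0]), ((0,-1,1), [1,1,0,0,0,0,0,0,0,0,0]), ((0,-1,2), [1,1,1,0,0,0,0,0,0,0,0]), ((0,-1,3), [1,0,0,0,1,1,0,0,1,0,0]),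 ((0,0,-1), [0,1,1,0,0,1,0,0,0,0,0]), ((0,0,0), [0,0,0,0,0,0,0,0,0,0,0]), ((0,0,1), [0,0,1,0,0,0,0,0,0,0,0]), ((0,0,2), [1,1,1,1,0,0,0,0,0,0,0]), ((0,0,3), [1,0,0,1,1,1,0,0,1,0,0]), ((0,0,4), [1,0,1,1,1,1,0,0,1,0,0]), ((0,1,-1), [0,1,0,0,1,0,0,0,0,0,0]), ((0,1,0), [0,0,0,1,0,0,0,0,0,0,0]), ((0,1,1), [0,0,1,1,0,0,0,0,0,0,0]), ((0,1,2), [1,1,0,0,0,1,1,0,0,1,0]), ((0,1,3), [1,1,1,0,0,1,1,0,0,1,0]), ((0,1,4), [1,0,0,0,0,0,1,0,0,1,0]), ((0,2,0), [0,1,1,1,1,0,0,0,0,0,0]), ((0,2,1), [0,0,0,0,0,1,1,0,0,1,0]), ((0,2,2), [0,0,1,0,0,1,1,0,0,1,0]), ((0,2,3), [1,1,0,0,1,0,1,0,0,1,0]), ((0,3,0), [0,1,0,0,1,1,1,0,0,1,0]), ((0,3,1), [0,0,0,1,0,1,1,0,0,1,0]), ((0,3,2), [0,0,0,0,1,0,1,0,0,1,0]),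 ((0,4,1), [0,1,1,1,1,1,1,0,0,1,0]), ((1,-3,2), [1,0,1,1,0,0,1,0,0,0,0]), ((1,-2,1), [1,1,1,0,0,1,0,0,0,0,0]), ((1,-2,2), [1,0,0,0,0,0,0,0,0,0,0]), ((1,-1,-1), [0,0,0,0,0,1,0,0,0,0,0]), ((1,-1,0), [0,0,1,0,0,1,0,0,0,0,0]), ((1,-1,1), [1,1,0,0,1,0,0,0,0,0,0]), ((1,-1,2), [1,0,0,1,0,0,0,0,0,0,0]), ((1,-1,3), [1,0,1,1,0,0,0,0,0,0,0]), ((1,0,-2), [0,1,0,0,1,1,0,0,0,0,0]), ((1,0,-1), [0,0,0,1,0,1,0,0,0,0,0]), ((1,0,0), [0,0,0,0,1,0,0,0,0,0,0]), ((1,0,1), [0,0,1,0,1,0,0,0,0,0,0]), ((1,0,2), [1,1,1,1,1,0,0,0,0,0,0]), ((1,0,3), [1,0,0,0,0,1,1,0,0,1,0]), ((1,1,-1), [0,1,1,1,1,1,0,0,0,0,0]), ((1,1,0), [0,0,0,1,1,0,0,0,0,0,0]), ((1,1,1), [0,0,1,1,1,0,0,0,0,0,0]), ((1,1,2), [1,1,0,0,1,1,1,0,0,1,0]),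 ((1,1,3), [1,0,0,1,0,1,1,0,0,1,0]), ((1,1,4), [1,0,0,0,1,0,1,0,0,1,0]), ((1,2,-1), [0,1,0,0,0,0,1,1,0,0,1]), ((1,2,0), [0,1,1,0,0,0,1,1,0,0,1]), ((1,2,1), [0,0,0,0,1,1,1,0,0,1,0]), ((1,2,2), [0,0,1,0,1,1,1,0,0,1,0]), ((1,2,3), [1,1,1,1,1,1,1,0,0,1,0]), ((1,3,0), [0,1,1,1,0,0,1,1,0,0,1]), ((1,3,1), [0,0,0,1,1,1,1,0,0,1,0]), ((1,3,2), [0,0,1,1,1,1,1,0,0,1,0]), ((1,4,0), [0,1,0,0,0,0,0,1,0,0,1]), ((1,4,1), [0,1,1,0,0,0,0,1,0,0,1]), ((2,-3,2), [1,0,1,0,0,1,0,0,0,0,0]), ((2,-2,1), [1,0,0,1,0,1,0,0,0,0,0]), ((2,-2,2), [1,0,0,0,1,0,0,0,0,0,0]), ((2,-1,-1), [0,0,0,0,1,1,0,0,0,0,0]), ((2,-1,0), [0,0,1,0,1,1,0,0,0,0,0]), ((2,-1,1), [1,1,1,1,1,1,0,0,0,0,0]), ((2,-1,2), [1,0,0,1,1,0,0,0,0,0,0]),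 ((2,-1,3), [1,0,1,1,1,0,0,0,0,0,0]), ((2,0,-1), [0,0,0,1,1,1,0,0,0,0,0]), ((2,0,0), [0,0,1,1,1,1,0,0,0,0,0]), ((2,0,1), [1,1,0,0,0,0,1,1,0,0,1]), ((2,0,2), [1,1,1,0,0,0,1,1,0,0,1]), ((2,0,3), [1,0,0,0,1,1,1,0,0,1,0]), ((2,1,-1), [0,1,1,0,0,1,1,1,0,0,1]), ((2,1,0), [0,0,0,0,0,0,1,1,0,0,1]), ((2,1,1), [0,0,1,0,0,0,1,1,0,0,1]), ((2,1,2), [1,1,1,1,0,0,1,1,0,0,1]), ((2,1,3), [1,0,0,1,1,1,1,0,0,1,0]), ((2,1,4), [1,0,1,1,1,1,1,0,0,1,0]), ((2,2,-1), [0,1,0,0,1,0,1,1,0,0,1]), ((2,2,0), [0,0,0,1,0,0,1,1,0,0,1]), ((2,2,1), [0,0,1,1,0,0,1,1,0,0,1]), ((2,2,2), [1,1,0,0,0,0,0,1,0,0,1]), ((2,2,3), [1,1,1,0,0,0,0,1,0,0,1]), ((2,3,0), [0,1,1,0,0,1,0,1,0,0,1]), ((2,3,1), [0,0,0,0,0,0,0,1,0,0,1]),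 ((3,-2,1), [1,0,0,1,1,1,0,0,0,0,0]), ((3,-2,2), [1,0,1,1,1,1,0,0,0,0,0]), ((3,-1,0), [1,1,0,0,0,1,1,1,0,0,1]), ((3,-1,1), [1,1,1,0,0,1,1,1,0,0,1]), ((3,-1,2), [1,0,0,0,0,0,1,1,0,0,1]), ((3,0,0), [0,0,1,0,0,1,1,1,0,0,1]), ((3,0,1), [1,1,0,0,1,0,1,1,0,0,1]), ((3,0,2), [1,0,0,1,0,0,1,1,0,0,1]), ((3,0,3), [1,0,1,1,0,0,1,1,0,0,1]), ((3,1,0), [0,0,0,0,1,0,1,1,0,0,1]), ((3,1,1), [1,1,0,0,0,1,0,1,0,0,1]), ((3,1,2), [1,1,1,0,0,1,0,1,0,0,1]), ((3,1,3), [1,0,0,0,0,0,0,1,0,0,1]), ((4,-1,2), [1,0,0,0,1,0,1,1,0,0,1]), ((4,0,3), [1,0,1,0,0,1,0,1,0,0,1])]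

def stepF (q : ℤ × ℤ × ℤ) (c e : ℤ) : ℤ × ℤ × ℤ :=
  (-q.2.2 + c + 2*e, q.1 + q.2.2 - 3*e, q.2.1 - q.2.2 + 4*e)

def flushF (q : ℤ × ℤ × ℤ) : List ℤ :=
  ((flushTab.find? (fun p => p.1 == q)).map Prod.snd).getD []

def chkP (q : ℤ × ℤ × ℤ) (l : List ℤ) : Prop :=
  l.length = 11 ∧ (∀ e ∈ l, e = 0 ∨ e = 1) ∧ l.foldl (fun s e => stepF s 0 e) q = (0,0,0)

instance (q : ℤ × ℤ × ℤ) (l : List ℤ) : Decidable (chkP q l) := by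
  unfold chkP; infer_instance

lemma tclosure : ∀ q ∈ Qset, ∀ c ∈ [(0:ℤ),1,2], ∃ e ∈ [(0:ℤ),1], stepF q c e ∈ Qset := by decide

lemma flush_ok : ∀ q ∈ Qset, chkP q (flushF q) := by decide

noncomputable def valS (γ : ℝ) (q : ℤ × ℤ × ℤ) : ℝ :=
  (q.1 : ℝ) + (q.2.1 : ℝ) * (-γ) + (q.2.2 : ℝ) * (-γ)^2

noncomputable def polyv (γ : ℝ) : List ℤ → ℝ
  | [] => 0
  | e :: l => (e : ℝ) * (-γ)^l.length + polyv γ l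

lemma val_stepF (γ : ℝ) (hroot : γ ^ 3 - γ ^ 2 - γ - 1 = 0) (q : ℤ × ℤ × ℤ) (c e : ℤ) :
    valS γ (stepF q c e) = (-γ) * valS γ q + (c : ℝ) - (e : ℝ) * (-γ)^5 := by
  simp only [valS, stepF]
  push_cast
  linear_combination ((q.2.2 : ℝ) - 2*e - e*γ^2 - e*γ) * hroot

lemma foldl_val (γ : ℝ) (hroot : γ ^ 3 - γ ^ 2 - γ - 1 = 0) :
    ∀ (l : List ℤ) (q : ℤ × ℤ × ℤ),
      (-γ)^l.length * valS γ q
        = valS γ (l.foldl (fun s e => stepF s 0 e) q) + (-γ)^5 * polyv γ l := by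
  intro l
  induction l with
  | nil => intro q; simp [polyv]
  | cons e l ih =>
    intro q
    have h1 := val_stepF γ hroot q 0 e
    have h2 := ih (stepF q 0 e)
    simp only [List.foldl_cons, polyv, List.length_cons]
    push_cast at h1 ⊢
    linear_combination h2 - (-γ)^l.length * h1

lemma list_to_fun (γ : ℝ) :
    ∀ l : List ℤ, (∀ e ∈ l, e = 0 ∨ e = 1) →
      ∃ g : ℕ → ℤ, (∀ t, g t = 0 ∨ g t = 1) ∧
        polyv γ l = ∑ t ∈ Finset.range l.length, (g t : ℝ) * (-γ)^t := by
  intro l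
  induction l with
  | nil => exact fun _ => ⟨fun _ => 0, fun _ => Or.inl rfl, by simp [polyv]⟩
  | cons e l ih =>
    intro h
    obtain ⟨g, hg, hsum⟩ := ih (fun x hx => h x (List.mem_cons_of_mem _ hx))
    refine ⟨Function.update g l.length e, ?_, ?_⟩
    · intro t
      by_cases ht : t = l.length
      · subst ht; simpa using h e List.mem_cons_self
      · simpa [Function.update_of_ne ht] using hg t
    · rw [List.length_cons, Finset.sum_range_succ, Function.update_self,
        Finset.sum_congr rfl (fun t htm => by
          rw [Function.update_of_ne (Nat.ne_of_lt (Finset.mem_range.mp htm))]), ← hsum]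
      simp only [polyv]
      ring


lemma run (γ : ℝ) (hroot : γ ^ 3 - γ ^ 2 - γ - 1 = 0) :
    ∀ n : ℕ, ∀ q ∈ Qset, ∀ c : ℕ → ℤ, (∀ i, c i = 0 ∨ c i = 1 ∨ c i = 2) →
      ∃ q' ∈ Qset, ∃ E : ℕ → ℤ, (∀ i, E i = 0 ∨ E i = 1) ∧
        (-γ)^n * valS γ q + ∑ i ∈ Finset.range n, (c i : ℝ) * (-γ)^i
          = ∑ i ∈ Finset.range n, (E i : ℝ) * (-γ)^(i+5) + valS γ q' := by
  intro n
  induction n with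
  | zero =>
    intro q hq c _
    exact ⟨q, hq, fun _ => 0, fun _ => Or.inl rfl, by simp⟩
  | succ n ih =>
    intro q hq c hc
    have hcn : c n ∈ [(0:ℤ),1,2] := by rcases hc n with h|h|h <;> simp [h]
    obtain ⟨e, he, hq1⟩ := tclosure q hq (c n) hcn
    obtain ⟨q', hq', E, hE, heq⟩ := ih (stepF q (c n) e) hq1 c hc
    have h1 := val_stepF γ hroot q (c n) e
    refine ⟨q', hq', Function.update E n e, ?_, ?_⟩
    · intro i
      by_cases hi : i = n
      · subst hi; simpa using (by simpa using he : e = 0 ∨ e = 1)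
      · simpa [Function.update_of_ne hi] using hE i
    · have hs : ∑ x ∈ Finset.range n, ((Function.update E n e x : ℤ) : ℝ) * (-γ)^(x+5)
            = ∑ i ∈ Finset.range n, ((E i : ℤ) : ℝ) * (-γ)^(i+5) :=
        Finset.sum_congr rfl (fun t htm => by
          rw [Function.update_of_ne (Nat.ne_of_lt (Finset.mem_range.mp htm))])
      rw [Finset.sum_range_succ, Finset.sum_range_succ, Function.update_self, hs]
      linear_combination heq - (-γ)^n * h1

lemma flush_val (γ : ℝ) (hγ : 1 < γ) (hroot : γ ^ 3 - γ ^ 2 - γ - 1 = 0)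
    (q : ℤ × ℤ × ℤ) (hq : q ∈ Qset) :
    ∃ f : ℤ → ℤ, (∀ i, f i = 0 ∨ f i = 1) ∧
      valS γ q = ∑ i ∈ Finset.Icc (-6 : ℤ) 4, (f i : ℝ) * (-γ)^i := by
  have hne : (-γ : ℝ) ≠ 0 := by
    intro h; nlinarith [neg_eq_zero.mp h]
  obtain ⟨hlen, hdig, hfold⟩ := flush_ok q hq
  have h := foldl_val γ hroot (flushF q) q
  rw [hfold, hlen] at h
  obtain ⟨g, hg, hp⟩ := list_to_fun γ (flushF q) hdig
  rw [hlen] at hp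
  rw [hp] at h
  simp only [valS] at h
  push_cast at h
  have hpow : ((-γ : ℝ))^(11:ℕ) ≠ 0 := pow_ne_zero _ hne
  have key : valS γ q = ∑ t ∈ Finset.range 11, (g t : ℝ) * (-γ)^((t : ℤ) - 6) := by
    apply mul_left_cancel₀ hpow
    rw [Finset.mul_sum]
    have hterm : ∀ t ∈ Finset.range 11,
        ((-γ : ℝ))^(11:ℕ) * ((g t : ℝ) * (-γ)^((t : ℤ) - 6)) = (g t : ℝ) * (-γ)^(t + 5) := by
      intro t _
      have h1 : ((-γ : ℝ))^(11:ℕ) * (-γ)^((t : ℤ) - 6) = (-γ)^(t + 5) := by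
        rw [← zpow_natCast (-γ) 11, ← zpow_add₀ hne]
        rw [show ((11:ℕ) : ℤ) + ((t : ℤ) - 6) = ((t + 5 : ℕ) : ℤ) by push_cast; ring]
        rw [zpow_natCast]
      rw [← h1]; ring
    rw [Finset.sum_congr rfl hterm]
    calc ((-γ : ℝ))^(11:ℕ) * valS γ q
        = (-γ)^5 * ∑ t ∈ Finset.range 11, (g t : ℝ) * (-γ)^t := by
          simp only [valS]; push_cast; linarith [h]
      _ = ∑ t ∈ Finset.range 11, (g t : ℝ) * (-γ)^(t + 5) := by
          rw [Finset.mul_sum]; exact Finset.sum_congr rfl fun t _ => by ring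
  refine ⟨fun i => g (i + 6).toNat, fun i => hg _, ?_⟩
  rw [key]
  refine Finset.sum_bij' (fun t _ => (t : ℤ) - 6) (fun i _ => (i + 6).toNat) ?_ ?_ ?_ ?_ ?_
  · intro t ht
    simp only [Finset.mem_range] at ht
    simp only [Finset.mem_Icc]; omega
  · intro i hi
    simp only [Finset.mem_Icc] at hi
    simp only [Finset.mem_range]; omega
  · intro t ht; simp only [Finset.mem_range] at ht; omega
  · intro i hi; simp only [Finset.mem_Icc] at hi; omega
  · intro t ht
    simp only [Finset.mem_range] at ht
    dsimp only
    rw [show ((t:ℤ) - 6 + 6).toNat = t by omega]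

theorem stmt_18 (γ : ℝ) (hγ : 1 < γ) (hroot : γ ^ 3 - γ ^ 2 - γ - 1 = 0)
    (x y : ℝ) (K₁ K₂ : ℕ) (d₁ d₂ : ℕ → ℤ)
    (hd₁ : ∀ i, d₁ i = 0 ∨ d₁ i = 1) (hd₂ : ∀ i, d₂ i = 0 ∨ d₂ i = 1)
    (hx : x = ∑ i ∈ Finset.range (K₁ + 1), (d₁ i : ℝ) * (-γ) ^ i)
    (hy : y = ∑ i ∈ Finset.range (K₂ + 1), (d₂ i : ℝ) * (-γ) ^ i) :
    ∃ (K' : ℕ) (e : ℤ → ℤ),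
      (∀ i : ℤ, e i = 0 ∨ e i = 1) ∧
      x + y = ∑ i ∈ Finset.Icc (-6 : ℤ) (K' : ℤ), (e i : ℝ) * (-γ) ^ i := by
  obtain ⟨K, hK1, hK2⟩ : ∃ K, K₁ ≤ K ∧ K₂ ≤ K := ⟨max K₁ K₂, Nat.le_max_left _ _, Nat.le_max_right _ _⟩
  set c : ℕ → ℤ := fun i => (if i ≤ K₁ then d₁ i else 0) + (if i ≤ K₂ then d₂ i else 0) with hc
  have hcd : ∀ i, c i = 0 ∨ c i = 1 ∨ c i = 2 := by
    intro i; simp only [hc]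
    rcases hd₁ i with h1|h1 <;> rcases hd₂ i with h2|h2 <;>
      by_cases hi1 : i ≤ K₁ <;> by_cases hi2 : i ≤ K₂ <;> simp [hi1, hi2, h1, h2]
  have hx' : x = ∑ i ∈ Finset.range (K + 1), ((if i ≤ K₁ then d₁ i else 0 : ℤ) : ℝ) * (-γ) ^ i := by
    rw [hx, ← Finset.sum_subset (Finset.range_subset_range.mpr (Nat.succ_le_succ hK1))
      (fun i _ hi => by
        rw [if_neg (by simp only [Finset.mem_range, Nat.lt_succ_iff] at hi; omega)]
        simp)]
    exact Finset.sum_congr rfl fun i hi => by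
      rw [if_pos (by simp only [Finset.mem_range, Nat.lt_succ_iff] at hi; exact hi)]
  have hy' : y = ∑ i ∈ Finset.range (K + 1), ((if i ≤ K₂ then d₂ i else 0 : ℤ) : ℝ) * (-γ) ^ i := by
    rw [hy, ← Finset.sum_subset (Finset.range_subset_range.mpr (Nat.succ_le_succ hK2))
      (fun i _ hi => by
        rw [if_neg (by simp only [Finset.mem_range, Nat.lt_succ_iff] at hi; omega)]
        simp)]
    exact Finset.sum_congr rfl fun i hi => by
      rw [if_pos (by simp only [Finset.mem_range, Nat.lt_succ_iff] at hi; exact hi)]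
  have hxy : x + y = ∑ i ∈ Finset.range (K + 1), (c i : ℝ) * (-γ) ^ i := by
    rw [hx', hy', ← Finset.sum_add_distrib]
    exact Finset.sum_congr rfl fun i _ => by simp only [hc]; push_cast; ring
  have h0 : ((0,0,0) : ℤ × ℤ × ℤ) ∈ Qset := by decide
  obtain ⟨q', hq', E, hE, hrun⟩ := run γ hroot (K+1) (0,0,0) h0 c hcd
  have hv0 : valS γ ((0,0,0) : ℤ × ℤ × ℤ) = 0 := by simp [valS]
  rw [hv0, mul_zero, zero_add] at hrun
  obtain ⟨f, hf, hflush⟩ := flush_val γ hγ hroot q' hq'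
  refine ⟨K + 5, fun i => if i ≤ 4 then f i else E (i - 5).toNat, ?_, ?_⟩
  · intro i
    by_cases hi : i ≤ 4
    · simpa [hi] using hf i
    · simpa [hi] using hE (i - 5).toNat
  · have hsplit : Finset.Icc (-6 : ℤ) ((K + 5 : ℕ) : ℤ)
        = Finset.Icc (-6 : ℤ) 4 ∪ Finset.Icc 5 ((K : ℤ) + 5) := by
      ext i; simp only [Finset.mem_Icc, Finset.mem_union]; push_cast; omega
    have hdisj : Disjoint (Finset.Icc (-6 : ℤ) 4) (Finset.Icc 5 ((K : ℤ) + 5)) :=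
      Finset.disjoint_left.mpr fun i hi hj => by
        simp only [Finset.mem_Icc] at hi hj; omega
    rw [hsplit, Finset.sum_union hdisj]
    have hpart1 : ∑ i ∈ Finset.Icc (-6:ℤ) 4,
          ((if i ≤ 4 then f i else E (i-5).toNat : ℤ) : ℝ) * (-γ)^i
        = ∑ i ∈ Finset.Icc (-6:ℤ) 4, (f i : ℝ) * (-γ)^i :=
      Finset.sum_congr rfl fun i hi => by
        rw [if_pos (Finset.mem_Icc.mp hi).2]
    have hpart2 : ∑ i ∈ Finset.Icc (5:ℤ) ((K:ℤ)+5),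
          ((if i ≤ 4 then f i else E (i-5).toNat : ℤ) : ℝ) * (-γ)^i
        = ∑ j ∈ Finset.range (K+1), (E j : ℝ) * (-γ)^(j+5) := by
      refine Finset.sum_bij' (fun i _ => (i - 5).toNat) (fun j _ => (j : ℤ) + 5) ?_ ?_ ?_ ?_ ?_
      · intro i hi; simp only [Finset.mem_Icc] at hi; simp only [Finset.mem_range]; omega
      · intro j hj; simp only [Finset.mem_range] at hj; simp only [Finset.mem_Icc]; omega
      · intro i hi; simp only [Finset.mem_Icc] at hi; omega
      · intro j hj; simp only [Finset.mem_range] at hj; omega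
      · intro i hi
        simp only [Finset.mem_Icc] at hi
        rw [if_neg (by omega)]
        have hexp : (-γ) ^ i = (-γ) ^ ((i - 5).toNat + 5) := by
          rw [← zpow_natCast (-γ) ((i - 5).toNat + 5)]
          congr 1
          omega
        rw [hexp]
    rw [hpart1, hpart2, hxy, hrun, hflush]
    ring
end
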